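/- Let (X,d) be a proper metric space with a fixed basepoint x₀ and with no isolated points, and let (D_n) be a sequence of Delone subsets of X with R(D_n) ≤ 1 for all n and ρ(D_n, X) → 0 as n → ∞. Then lim_{n→∞} r(D_n) = 0. -/
import Mathlib


open Metric Set Filter MeasureTheory

variable {X : Type*} [MetricSpace X]

/-- The metric ρ on subsets of `X` (with basepoint `x₀`), following Smilansky–Solomon. -/
noncomputable def rho (x₀ : X) (D₁ D₂ : Set X) : ℝ :=
  sInf ({ε : ℝ | 0 < ε ∧ D₁ ∩ ball x₀ (1 / ε) ⊆ thickening ε D₂ ∧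
      D₂ ∩ ball x₀ (1 / ε) ⊆ thickening ε D₁} ∪ {1})

/-- `D` is `s`-discrete: distinct points of `D` are at distance at least `s`. -/
def IsDiscreteWith (s : ℝ) (D : Set X) : Prop :=
  ∀ x ∈ D, ∀ y ∈ D, x ≠ y → s ≤ dist x y

/-- `D` is `R`-dense: every point of `X` is within distance `R` of `D`. -/
def IsDenseWith (R : ℝ) (D : Set X) : Prop :=
  ∀ x : X, ∃ y ∈ D, dist x y ≤ R

/-- `D` is a Delone set: `r`-discrete and `R`-dense for some `r, R > 0`. -/
def IsDelone (D : Set X) : Prop :=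
  ∃ r > (0 : ℝ), ∃ R > (0 : ℝ), IsDiscreteWith r D ∧ IsDenseWith R D

/-- `r(D)`: the infimum of distances between distinct points of `D`. -/
noncomputable def rSep (D : Set X) : ℝ :=
  sInf {t : ℝ | ∃ x ∈ D, ∃ y ∈ D, x ≠ y ∧ t = dist x y}

/-- `R(D)`: the infimum of the `R` such that `D` is `R`-dense. -/
noncomputable def RDen (D : Set X) : ℝ :=
  sInf {R : ℝ | IsDenseWith R D}

/-- A control function: a monotone continuous `F : [0,1] → [0,1]` with `F 0 = 0`. -/
def IsControlFunction (F : ℝ → ℝ) : Prop :=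
  MonotoneOn F (Icc 0 1) ∧ ContinuousOn F (Icc 0 1) ∧
    MapsTo F (Icc 0 1) (Icc 0 1) ∧ F 0 = 0

/-- A Delone set is controlled by `F` if `R(D) ≥ R` implies `r(D) ≥ F R` for `R ∈ [0,1]`. -/
def ControlledBy (F : ℝ → ℝ) (D : Set X) : Prop :=
  ∀ R ∈ Icc (0 : ℝ) 1, R ≤ RDen D → F R ≤ rSep D

/-- `𝒟_F`: the Delone sets `D ⊆ X` with `R(D) ≤ 1` that are controlled by `F`. -/
def DeloneFamily (F : ℝ → ℝ) : Set (Set X) :=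
  {D : Set X | IsDelone D ∧ RDen D ≤ 1 ∧ ControlledBy F D}

/-- If `X` is proper with no isolated points and `D_n` are Delone sets with `R(D_n) ≤ 1`
converging to `X` in `ρ`, then `r(D_n) → 0`. -/
theorem rSep_tendsto_zero {X : Type*} [MetricSpace X] [ProperSpace X]
    (x₀ : X) (hiso : ∀ x : X, ¬ IsOpen ({x} : Set X))
    (D : ℕ → Set X) (hD : ∀ n, IsDelone (D n)) (hRD : ∀ n, RDen (D n) ≤ 1)
    (hconv : Tendsto (fun n => rho x₀ (D n) (Set.univ : Set X)) atTop (nhds 0)) :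
    Tendsto (fun n => rSep (D n)) atTop (nhds 0) := by
  rw [Metric.tendsto_atTop]
  intro δ hδ
  -- find a point y ≠ x₀ close to x₀
  obtain ⟨y, hy_mem, hy_ne⟩ : ∃ y ∈ ball x₀ (min (δ/4) 1), y ≠ x₀ := by
    by_contra h
    push_neg at h
    exact hiso x₀ (Metric.isOpen_iff.mpr fun x hx => by
      rcases hx with rfl
      exact ⟨min (δ/4) 1, lt_min (by linarith) one_pos, fun z hz => h z hz⟩)
  have hd0 : 0 < dist x₀ y := dist_pos.mpr (fun h => hy_ne h.symm)
  set d0 := dist x₀ y with hd0def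
  have hd0δ : d0 < δ/4 := lt_of_lt_of_le (by rw [mem_ball, dist_comm] at hy_mem; exact hy_mem) (min_le_left _ _)
  have hd01 : d0 < 1 := lt_of_lt_of_le (by rw [mem_ball, dist_comm] at hy_mem; exact hy_mem) (min_le_right _ _)
  set ε := d0 / 3 with hεdef
  have hεpos : 0 < ε := by positivity
  have hev : ∀ᶠ n in atTop, rho x₀ (D n) (Set.univ : Set X) < ε := by
    have := hconv (Iio_mem_nhds hεpos)
    simpa using this
  obtain ⟨N, hN⟩ := eventually_atTop.mp hev
  refine ⟨N, fun n hn => ?_⟩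
  have hrho := hN n hn
  -- extract ε' from the infimum
  set S := {e : ℝ | 0 < e ∧ D n ∩ ball x₀ (1 / e) ⊆ thickening e (Set.univ : Set X) ∧
      (Set.univ : Set X) ∩ ball x₀ (1 / e) ⊆ thickening e (D n)} with hSdef
  have hbdd : BddBelow (S ∪ {1}) := ⟨0, fun e he => by
    rcases he with he | he
    · exact le_of_lt he.1
    · simp at he; simp [he]⟩
  have hne : (S ∪ {1} : Set ℝ).Nonempty := ⟨1, Or.inr rfl⟩
  have hlt : sInf (S ∪ {1}) < ε := hrho
  obtain ⟨ε', hε'mem, hε'lt⟩ := (csInf_lt_iff hbdd hne).mp hlt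
  have hε'1 : ε' ∈ S := by
    rcases hε'mem with h | h
    · exact h
    · simp at h; exfalso; rw [h] at hε'lt; linarith [hd01]
  obtain ⟨hε'pos, -, hcov⟩ := hε'1
  have hε'small : ε' < d0/3 := hε'lt
  have hball : 3 < 1 / ε' := by
    rw [lt_div_iff₀ hε'pos]
    nlinarith
  -- get p near x₀ and q near y
  have hx₀mem : x₀ ∈ thickening ε' (D n) :=
    hcov ⟨Set.mem_univ _, by rw [mem_ball]; simp; linarith⟩
  have hymem : y ∈ thickening ε' (D n) :=
    hcov ⟨Set.mem_univ _, by rw [mem_ball, dist_comm]; linarith⟩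
  rw [mem_thickening_iff] at hx₀mem hymem
  obtain ⟨p, hp, hpd⟩ := hx₀mem
  obtain ⟨q, hq, hqd⟩ := hymem
  have hpq_lb : d0 - 2 * ε' ≤ dist p q := by
    have := dist_triangle4 x₀ p q y
    have h1 : dist q y < ε' := by rw [dist_comm]; exact hqd
    linarith
  have hpq_ne : p ≠ q := by
    intro h
    rw [h, dist_self] at hpq_lb
    linarith
  have hpq_ub : dist p q < δ := by
    have h2 : dist p q ≤ dist p x₀ + dist x₀ y + dist y q := dist_triangle4 p x₀ y q
    have h3 : dist p x₀ < ε' := by rw [dist_comm]; exact hpd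
    have h4 : dist y q < ε' := hqd
    linarith
  have hrle : rSep (D n) ≤ dist p q := by
    apply csInf_le
    · refine ⟨0, fun t ht => ?_⟩
      obtain ⟨a, -, b, -, -, rfl⟩ := ht
      exact dist_nonneg
    · exact ⟨p, hp, q, hq, hpq_ne, rfl⟩
  have hrnn : 0 ≤ rSep (D n) := by
    apply Real.sInf_nonneg
    intro t ht
    obtain ⟨a, -, b, -, -, rfl⟩ := ht
    exact dist_nonneg
  rw [Real.dist_eq, sub_zero, abs_of_nonneg hrnn]
  linarith
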